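/- For a nonzero complex number z and |q|<1 (or as formal Laurent series), ∑_{n∈ℤ} (-1)^n q^{n(n-1)/2} z^n = (z;q)_∞ (q/z;q)_∞ (q;q)_∞. -/

import Mathlib

open scoped BigOperators

/-- Finite q-Pochhammer symbol `(a;q)_n`. -/
noncomputable def qPoch (a q : ℂ) (n : ℕ) : ℂ := ∏ k ∈ Finset.range n, (1 - a * q ^ k)

/-- Infinite q-Pochhammer symbol `(a;q)_∞`. -/
noncomputable def qPochInf (a q : ℂ) : ℂ := ∏' k : ℕ, (1 - a * q ^ k)

/-- Gaussian (q-)binomial coefficient `[N choose K]_q`, zero outside `0 ≤ K ≤ N`. -/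
noncomputable def qBinom (q : ℂ) (N K : ℤ) : ℂ :=
  if 0 ≤ K ∧ K ≤ N then qPoch q q N.toNat / (qPoch q q K.toNat * qPoch q q (N - K).toNat)
  else 0

namespace JTP

/-- truncated Gaussian binomial, ℕ-indexed -/
noncomputable def Cq (q : ℂ) (M K : ℕ) : ℂ :=
  if K ≤ M then qPoch q q M / (qPoch q q K * qPoch q q (M - K)) else 0

variable {q : ℂ}

lemma fac_ne (hq : ‖q‖ < 1) (k : ℕ) : (1 : ℂ) - q * q ^ k ≠ 0 := by
  intro h
  have h1 : q * q ^ k = 1 := by linear_combination -h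
  have : ‖q * q ^ k‖ < 1 := by
    calc ‖q * q ^ k‖ = ‖q‖ * ‖q‖ ^ k := by simp [norm_mul, norm_pow]
    _ ≤ ‖q‖ * 1 := by
        refine mul_le_mul_of_nonneg_left ?_ (norm_nonneg q)
        exact pow_le_one₀ (norm_nonneg q) hq.le
    _ < 1 := by simpa using hq
  rw [h1] at this; simp at this

lemma qPoch_ne (hq : ‖q‖ < 1) (m : ℕ) : qPoch q q m ≠ 0 :=
  Finset.prod_ne_zero_iff.2 fun k _ => fac_ne hq k

lemma qPoch_succ (a : ℂ) (m : ℕ) : qPoch a q (m + 1) = qPoch a q m * (1 - a * q ^ m) :=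
  Finset.prod_range_succ _ _

lemma qPoch_zero (a : ℂ) : qPoch a q 0 = 1 := Finset.prod_range_zero _

lemma Cq_self (hq : ‖q‖ < 1) (M : ℕ) : Cq q M M = 1 := by
  rw [Cq, if_pos le_rfl, Nat.sub_self, qPoch_zero, mul_one, div_self (qPoch_ne hq M)]

lemma Cq_zero (hq : ‖q‖ < 1) (M : ℕ) : Cq q M 0 = 1 := by
  rw [Cq, if_pos (Nat.zero_le M), Nat.sub_zero, qPoch_zero, one_mul, div_self (qPoch_ne hq M)]

lemma Cq_pascal (hq : ‖q‖ < 1) (M k : ℕ) :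
    Cq q (M + 1) (k + 1) = Cq q M (k + 1) + q ^ (M - k) * Cq q M k := by
  rcases lt_trichotomy k M with hk | rfl | hk
  · -- main case : k + 1 ≤ M
    have hk1 : k + 1 ≤ M := hk
    simp only [Cq, if_pos (by omega : k + 1 ≤ M + 1), if_pos hk1, if_pos hk.le]
    have e1 : M + 1 - (k + 1) = M - k := by omega
    have e2 : M - k = (M - (k + 1)) + 1 := by omega
    rw [e1, qPoch_succ q M, e2, qPoch_succ q (M - (k+1)), qPoch_succ q k]
    have h1 := qPoch_ne hq M
    have h2 := qPoch_ne hq (k + 1)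
    have h3 := qPoch_ne hq (M - (k + 1))
    have h2' := qPoch_ne hq k
    rw [qPoch_succ q k] at h2
    have hfk : (1 : ℂ) - q * q ^ k ≠ 0 := fac_ne hq k
    have hfM : (1 : ℂ) - q * q ^ (M - (k+1)) ≠ 0 := fac_ne hq (M - (k+1))
    have h1e : q * q ^ (M - (k + 1)) = q ^ (M - k) := by
      rw [← pow_succ']; congr 1; omega
    have h2e : q ^ (M - k) * (q * q ^ k) = q * q ^ M := by
      rw [mul_left_comm, ← pow_add]; congr 2; omega
    rw [← h2e, ← h1e]
    field_simp
    ring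
  · -- k = M
    rw [Cq_self hq, Cq_self hq]
    rw [Cq, if_neg (by omega), Nat.sub_self, pow_zero]
    ring
  · -- k > M
    simp [Cq, Nat.not_succ_le_self, if_neg (by omega : ¬ k + 1 ≤ M + 1),
      if_neg (by omega : ¬ k + 1 ≤ M), if_neg (by omega : ¬ k ≤ M)]
    intro h; omega


lemma gauss (hq : ‖q‖ < 1) (x : ℂ) (M : ℕ) :
    ∏ j ∈ Finset.range M, (1 + x * q ^ j)
      = ∑ k ∈ Finset.range (M + 1), Cq q M k * q ^ (k * (k - 1) / 2) * x ^ k := by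
  induction M with
  | zero => simp [Cq_zero hq]
  | succ M ih =>
    rw [Finset.prod_range_succ, ih]
    rw [Finset.sum_range_succ' (fun k => Cq q (M + 1) k * q ^ (k * (k - 1) / 2) * x ^ k) (M + 1)]
    simp only [Cq_pascal hq]
    have h0 : Cq q (M + 1) 0 * q ^ (0 * (0 - 1) / 2) * x ^ 0 = 1 := by
      simp [Cq_zero hq]
    rw [h0]
    have he : ∀ k : ℕ, (k + 1) * (k + 1 - 1) / 2 = k * (k - 1) / 2 + k := by
      intro k
      have h1 : (k + 1) * (k + 1 - 1) = k * (k - 1) + 2 * k := by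
        rcases k with _ | m
        · rfl
        · simp only [Nat.add_sub_cancel]; ring
      rw [h1, Nat.add_mul_div_left _ _ (by norm_num : 0 < 2)]
    have split : ∀ k, (Cq q M (k + 1) + q ^ (M - k) * Cq q M k) * q ^ ((k + 1) * (k + 1 - 1) / 2) * x ^ (k + 1)
        = Cq q M (k + 1) * q ^ ((k + 1) * (k + 1 - 1) / 2) * x ^ (k + 1)
          + (Cq q M k * q ^ (k * (k - 1) / 2) * x ^ k) * (x * q ^ M) := by
      intro k
      rcases le_or_gt k M with h | h
      · have hq2 : q ^ (M - k) * q ^ (k * (k - 1) / 2 + k) = q ^ (k * (k - 1) / 2) * q ^ M := by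
          rw [← pow_add, ← pow_add]
          congr 1
          generalize k * (k - 1) / 2 = d
          omega
        rw [he k]
        linear_combination (Cq q M k * x ^ (k + 1)) * hq2
      · have hk0 : Cq q M k = 0 := by rw [Cq, if_neg (by omega)]
        have hk1 : Cq q M (k + 1) = 0 := by rw [Cq, if_neg (by omega)]
        rw [hk0, hk1]; ring
    simp only [split]
    rw [Finset.sum_add_distrib, ← Finset.sum_mul]
    have collapse : (∑ k ∈ Finset.range (M + 1),
        Cq q M (k + 1) * q ^ ((k + 1) * (k + 1 - 1) / 2) * x ^ (k + 1)) + 1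
        = ∑ k ∈ Finset.range (M + 1), Cq q M k * q ^ (k * (k - 1) / 2) * x ^ k := by
      rw [Finset.sum_range_succ
        (fun k => Cq q M (k + 1) * q ^ ((k + 1) * (k + 1 - 1) / 2) * x ^ (k + 1)) M]
      rw [Finset.sum_range_succ' (fun k => Cq q M k * q ^ (k * (k - 1) / 2) * x ^ k) M]
      have hlast : Cq q M (M + 1) = 0 := by rw [Cq, if_neg (by omega)]
      simp [hlast, Cq_zero hq]
    linear_combination -collapse


lemma half_mul_even (n : ℕ) : 2 * (n * (n + 1) / 2) = n * (n + 1) :=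
  Nat.two_mul_div_two_of_even (Nat.even_mul_succ_self n)

lemma half_mul_even' (k : ℕ) : 2 * (k * (k - 1) / 2) = k * (k - 1) := by
  rcases k with _ | m
  · rfl
  · have : (m + 1) * (m + 1 - 1) = m * (m + 1) := by simp [Nat.add_sub_cancel]; ring
    rw [this, half_mul_even]

lemma Ek_ineq (N k : ℕ) : N * k ≤ k * (k - 1) / 2 + N * (N + 1) / 2 := by
  have h1 := half_mul_even N
  have h2 := half_mul_even' k
  have h3 : 2 * (N * k) ≤ k * (k - 1) + N * (N + 1) := by
    rcases k with _ | m
    · simp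
    · simp only [Nat.add_sub_cancel]
      zify
      have ht : (0 : ℤ) ≤ ((m : ℤ) - N) * ((m : ℤ) - N + 1) := by
        rcases le_or_gt 0 ((m : ℤ) - N) with h | h
        · nlinarith
        · nlinarith
      nlinarith [ht]
  omega

lemma sum_range_sub (N : ℕ) : ∑ j ∈ Finset.range N, (N - j) = N * (N + 1) / 2 := by
  induction N with
  | zero => rfl
  | succ N ih =>
    have : ∑ j ∈ Finset.range (N + 1), (N + 1 - j)
        = (∑ j ∈ Finset.range N, (N - j)) + (N + 1) := by
      rw [Finset.sum_range_succ]
      have : ∀ j ∈ Finset.range N, N + 1 - j = (N - j) + 1 := fun j hj => by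
        have := Finset.mem_range.1 hj; omega
      rw [Finset.sum_congr rfl this, Finset.sum_add_distrib]
      simp [Finset.card_range]
      omega
    rw [this, ih]
    have h1 := half_mul_even N
    have h2 := half_mul_even (N + 1)
    have : (N + 1) * (N + 1 + 1) = N * (N + 1) + 2 * (N + 1) := by ring
    omega

lemma star (hq : ‖q‖ < 1) (hq0 : q ≠ 0) {z : ℂ} (hz : z ≠ 0) (N : ℕ) :
    ((-1 : ℂ) ^ N * z ^ N) * ∏ i ∈ Finset.range N, ((1 - z * q ^ i) * (1 - q / z * q ^ i))
      = ∑ k ∈ Finset.range (2 * N + 1),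
          Cq q (2 * N) k * q ^ (k * (k - 1) / 2 + N * (N + 1) / 2 - N * k)
            * ((-1 : ℂ) ^ k * z ^ k) := by
  have hqN : (q : ℂ) ^ N ≠ 0 := pow_ne_zero _ hq0
  set x : ℂ := -z * (q ^ N)⁻¹ with hx
  have hg := gauss hq x (2 * N)
  have hprod2 : ∏ j ∈ Finset.range (2 * N), (1 + x * q ^ j)
      = (∏ j ∈ Finset.range N, (1 + x * q ^ j)) * ∏ j ∈ Finset.range N, (1 - z * q ^ j) := by
    rw [two_mul, Finset.prod_range_add]
    congr 1
    refine Finset.prod_congr rfl fun j _ => ?_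
    rw [hx, pow_add]
    field_simp
    ring
  have key1 : q ^ (N * (N + 1) / 2) * ∏ j ∈ Finset.range N, (1 + x * q ^ j)
      = (-z) ^ N * ∏ j ∈ Finset.range N, (1 - q / z * q ^ j) := by
    rw [← sum_range_sub N, ← Finset.prod_pow_eq_pow_sum, ← Finset.prod_mul_distrib]
    have step1 : ∀ j ∈ Finset.range N, q ^ (N - j) * (1 + x * q ^ j) = q ^ (N - j) - z := by
      intro j hj
      have hj' := Finset.mem_range.1 hj
      have hjN : q ^ (N - j) * q ^ j = q ^ N := by rw [← pow_add]; congr 1; omega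
      rw [hx]
      field_simp
      linear_combination (-z) * hjN
    rw [Finset.prod_congr rfl step1]
    have hrefl : ∏ j ∈ Finset.range N, (q ^ (N - j) - z)
        = ∏ j ∈ Finset.range N, (q ^ (j + 1) - z) := by
      rw [← Finset.prod_range_reflect (fun j => q ^ (j + 1) - z) N]
      refine Finset.prod_congr rfl fun j hj => ?_
      have hj' := Finset.mem_range.1 hj
      congr 2
      omega
    rw [hrefl]
    have step2 : ∀ j ∈ Finset.range N, q ^ (j + 1) - z = (-z) * (1 - q / z * q ^ j) := by
      intro j _
      field_simp
      ring
    rw [Finset.prod_congr rfl step2, Finset.prod_mul_distrib, Finset.prod_const,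
      Finset.card_range]
  have key2 : q ^ (N * (N + 1) / 2) * ∑ k ∈ Finset.range (2 * N + 1),
        Cq q (2 * N) k * q ^ (k * (k - 1) / 2) * x ^ k
      = ∑ k ∈ Finset.range (2 * N + 1),
          Cq q (2 * N) k * q ^ (k * (k - 1) / 2 + N * (N + 1) / 2 - N * k)
            * ((-1 : ℂ) ^ k * z ^ k) := by
    rw [Finset.mul_sum]
    refine Finset.sum_congr rfl fun k _ => ?_
    have hxk : x ^ k = (-1 : ℂ) ^ k * z ^ k * (q ^ (N * k))⁻¹ := by
      rw [hx, mul_pow, neg_pow, ← inv_pow, ← pow_mul]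
      ring
    have hEe : q ^ (N * (N + 1) / 2) * q ^ (k * (k - 1) / 2)
        = q ^ (k * (k - 1) / 2 + N * (N + 1) / 2 - N * k) * q ^ (N * k) := by
      rw [← pow_add, ← pow_add, Nat.sub_add_cancel (Ek_ineq N k)]
      congr 1
      omega
    have hNk : (q : ℂ) ^ (N * k) ≠ 0 := pow_ne_zero _ hq0
    calc q ^ (N * (N + 1) / 2) * (Cq q (2 * N) k * q ^ (k * (k - 1) / 2) * x ^ k)
        = Cq q (2 * N) k * ((-1 : ℂ) ^ k * z ^ k)
            * (q ^ (N * (N + 1) / 2) * q ^ (k * (k - 1) / 2)) * (q ^ (N * k))⁻¹ := by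
          rw [hxk]; ring
      _ = Cq q (2 * N) k * ((-1 : ℂ) ^ k * z ^ k)
            * q ^ (k * (k - 1) / 2 + N * (N + 1) / 2 - N * k)
            * (q ^ (N * k) * (q ^ (N * k))⁻¹) := by rw [hEe]; ring
      _ = _ := by rw [mul_inv_cancel₀ hNk]; ring
  calc ((-1 : ℂ) ^ N * z ^ N) * ∏ i ∈ Finset.range N, ((1 - z * q ^ i) * (1 - q / z * q ^ i))
      = ((-z) ^ N * ∏ j ∈ Finset.range N, (1 - q / z * q ^ j))
          * ∏ j ∈ Finset.range N, (1 - z * q ^ j) := by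
        rw [Finset.prod_mul_distrib, neg_pow]; ring
    _ = (q ^ (N * (N + 1) / 2) * ∏ j ∈ Finset.range N, (1 + x * q ^ j))
          * ∏ j ∈ Finset.range N, (1 - z * q ^ j) := by rw [key1]
    _ = q ^ (N * (N + 1) / 2) * ∏ j ∈ Finset.range (2 * N), (1 + x * q ^ j) := by
        rw [hprod2]; ring
    _ = _ := by rw [hg, key2]


open Filter Topology

-- pointwise lower bound
lemma pw_lb {r x : ℝ} (hr : r < 1) (hx0 : 0 ≤ x) (hxr : x ≤ r) :
    Real.exp (-(x / (1 - r))) ≤ 1 - x := by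
  have hr1 : (0:ℝ) < 1 - r := by linarith
  set u := x / (1 - r) with hu
  have hu0 : 0 ≤ u := div_nonneg hx0 hr1.le
  have hxu : u * (1 - r) = x := by rw [hu]; exact div_mul_cancel₀ x hr1.ne'
  have hexp : 1 + u ≤ Real.exp u := by
    have := Real.add_one_le_exp u; linarith
  have hinv : Real.exp (-u) * Real.exp u = 1 := by
    rw [← Real.exp_add]; simp
  nlinarith [Real.exp_pos u, Real.exp_pos (-u), mul_nonneg hu0 (sub_nonneg.2 hxr),
    mul_le_mul_of_nonneg_left hexp (Real.exp_pos (-u)).le]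

lemma qPoch_norm_le (hq : ‖q‖ < 1) (m : ℕ) :
    ‖qPoch q q m‖ ≤ Real.exp ((1 - ‖q‖)⁻¹) := by
  set r := ‖q‖ with hr
  have hr0 : 0 ≤ r := norm_nonneg q
  have hgeom : ∑ k ∈ Finset.range m, r ^ k ≤ (1 - r)⁻¹ := by
    refine Summable.sum_le_tsum (L := SummationFilter.unconditional ℕ) (Finset.range m) (fun k _ => pow_nonneg hr0 k) ?_ |>.trans_eq ?_
    · exact summable_geometric_of_lt_one hr0 hq
    · exact tsum_geometric_of_lt_one hr0 hq
  calc ‖qPoch q q m‖ = ∏ k ∈ Finset.range m, ‖1 - q * q ^ k‖ := norm_prod _ _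
    _ ≤ ∏ k ∈ Finset.range m, Real.exp (r ^ k) := by
        refine Finset.prod_le_prod (fun k _ => norm_nonneg _) fun k _ => ?_
        have h1 : ‖(1:ℂ) - q * q ^ k‖ ≤ 1 + r ^ (k + 1) := by
          refine (norm_sub_le _ _).trans ?_
          rw [norm_one, norm_mul, norm_pow, pow_succ']
        refine h1.trans ?_
        have h2 : r ^ (k + 1) ≤ r ^ k := pow_le_pow_of_le_one hr0 hq.le (by omega)
        have := Real.add_one_le_exp (r ^ k)
        linarith
    _ = Real.exp (∑ k ∈ Finset.range m, r ^ k) := by rw [Real.exp_sum]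
    _ ≤ _ := Real.exp_le_exp.2 hgeom

lemma qPoch_norm_ge (hq : ‖q‖ < 1) (m : ℕ) :
    Real.exp (-((1 - ‖q‖)⁻¹ * (1 - ‖q‖)⁻¹)) ≤ ‖qPoch q q m‖ := by
  set r := ‖q‖ with hr
  have hr0 : 0 ≤ r := norm_nonneg q
  have hr1 : (0:ℝ) < 1 - r := by linarith
  have hgeom : ∑ k ∈ Finset.range m, r ^ (k + 1) ≤ (1 - r)⁻¹ := by
    have h1 : ∀ k ∈ Finset.range m, r ^ (k + 1) ≤ r ^ k := fun k _ =>
      pow_le_pow_of_le_one hr0 hq.le (by omega)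
    refine (Finset.sum_le_sum h1).trans ?_
    refine Summable.sum_le_tsum (L := SummationFilter.unconditional ℕ) (Finset.range m) (fun k _ => pow_nonneg hr0 k) ?_ |>.trans_eq ?_
    · exact summable_geometric_of_lt_one hr0 hq
    · exact tsum_geometric_of_lt_one hr0 hq
  calc Real.exp (-((1 - r)⁻¹ * (1 - r)⁻¹))
      ≤ Real.exp (∑ k ∈ Finset.range m, -(r ^ (k + 1) / (1 - r))) := by
        refine Real.exp_le_exp.2 ?_
        have h4 : (∑ k ∈ Finset.range m, r ^ (k + 1)) / (1 - r) ≤ (1 - r)⁻¹ * (1 - r)⁻¹ := by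
          rw [← div_eq_mul_inv ((1 - r)⁻¹) (1 - r)]
          gcongr
        calc -((1 - r)⁻¹ * (1 - r)⁻¹) ≤ -((∑ k ∈ Finset.range m, r ^ (k + 1)) / (1 - r)) :=
              neg_le_neg h4
          _ = ∑ k ∈ Finset.range m, -(r ^ (k + 1) / (1 - r)) := by
              rw [Finset.sum_div, ← Finset.sum_neg_distrib]
    _ = ∏ k ∈ Finset.range m, Real.exp (-(r ^ (k + 1) / (1 - r))) := by rw [Real.exp_sum]
    _ ≤ ∏ k ∈ Finset.range m, ‖1 - q * q ^ k‖ := by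
        refine Finset.prod_le_prod (fun k _ => (Real.exp_pos _).le) fun k _ => ?_
        have h1 : Real.exp (-(r ^ (k + 1) / (1 - r))) ≤ 1 - r ^ (k + 1) :=
          pw_lb hq (pow_nonneg hr0 _) (pow_le_of_le_one hr0 hq.le (by omega))
        refine h1.trans ?_
        have h2 : ‖q * q ^ k‖ = r ^ (k + 1) := by rw [norm_mul, norm_pow, pow_succ']
        have := norm_sub_norm_le (1:ℂ) (q * q ^ k)
        simp only [norm_one] at this
        linarith [this, h2.le, h2.ge]
    _ = ‖qPoch q q m‖ := (norm_prod _ _).symm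


lemma hasProd_zero_of_factor {f : ℕ → ℂ} {k : ℕ} (hk : f k = 0) : HasProd f 0 := by
  have hev : ∀ᶠ s : Finset ℕ in atTop, ∏ i ∈ s, f i = 0 := by
    filter_upwards [Filter.eventually_ge_atTop ({k} : Finset ℕ)] with s hs
    exact Finset.prod_eq_zero (hs (Finset.mem_singleton_self k)) hk
  exact Tendsto.congr' (by filter_upwards [hev] with s hs using hs.symm) tendsto_const_nhds

lemma summable_log (hq : ‖q‖ < 1) (a : ℂ) :
    Summable fun n : ℕ => Complex.log (1 - a * q ^ n) := by
  refine Summable.of_norm_bounded_eventually_nat (g := fun n => 3 / 2 * (‖a‖ * ‖q‖ ^ n)) ?_ ?_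
  · exact ((summable_geometric_of_lt_one (norm_nonneg q) hq).mul_left ‖a‖).mul_left _
  · have h0 : Tendsto (fun n : ℕ => ‖a‖ * ‖q‖ ^ n) atTop (𝓝 0) := by
      simpa using (tendsto_pow_atTop_nhds_zero_of_norm_lt_one (x := ‖q‖)
        (by simpa using hq)).const_mul ‖a‖
    filter_upwards [h0.eventually_le_const (by norm_num : (0:ℝ) < 1/2)] with n hn
    have hn' : ‖-(a * q ^ n)‖ ≤ 1 / 2 := by
      rw [norm_neg, norm_mul, norm_pow]; exact hn
    have := Complex.norm_log_one_add_half_le_self hn'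
    rw [norm_neg, norm_mul, norm_pow] at this
    rw [sub_eq_add_neg]; exact this

lemma hasProd_qPochInf (hq : ‖q‖ < 1) (a : ℂ) :
    HasProd (fun k : ℕ => 1 - a * q ^ k) (qPochInf a q) := by
  by_cases hf : ∀ k : ℕ, (1 : ℂ) - a * q ^ k ≠ 0
  · have := Complex.hasProd_of_hasSum_log hf (summable_log hq a).hasSum
    exact this.multipliable.hasProd
  · push_neg at hf
    obtain ⟨k, hk⟩ := hf
    have h0 : HasProd (fun k : ℕ => 1 - a * q ^ k) 0 := hasProd_zero_of_factor hk
    have : qPochInf a q = 0 := h0.tprod_eq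
    rw [this]
    exact h0

lemma tendsto_qPoch (hq : ‖q‖ < 1) (a : ℂ) :
    Tendsto (fun m => qPoch a q m) atTop (𝓝 (qPochInf a q)) :=
  (hasProd_qPochInf hq a).tendsto_prod_nat

lemma qPochInf_ne (hq : ‖q‖ < 1) : qPochInf q q ≠ 0 := by
  have := Complex.cexp_tsum_eq_tprod (f := fun k : ℕ => 1 - q * q ^ k)
    (fun k => fac_ne hq k) (summable_log hq q)
  rw [qPochInf, ← this]
  exact Complex.exp_ne_zero _


noncomputable def c (q z : ℂ) (n : ℤ) : ℂ := (-1) ^ n * q ^ (n * (n - 1) / 2) * z ^ n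

lemma tri_succ (k : ℕ) : (k + 1) * ((k + 1) - 1) / 2 = k * (k - 1) / 2 + k := by
  have h1 : (k + 1) * (k + 1 - 1) = k * (k - 1) + 2 * k := by
    rcases k with _ | m
    · rfl
    · simp only [Nat.add_sub_cancel]; ring
  rw [h1, Nat.add_mul_div_left _ _ (by norm_num : 0 < 2)]

lemma exp_nat_cast (m : ℕ) : ((m : ℤ) * ((m : ℤ) - 1)) / 2 = ((m * (m - 1) / 2 : ℕ) : ℤ) := by
  rcases m with _ | s
  · rfl
  · rw [Int.natCast_ediv]
    congr 1
    push_cast [Nat.add_sub_cancel]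
    ring

lemma exp_neg_cast (m : ℕ) : ((-m : ℤ) * ((-m : ℤ) - 1)) / 2 = ((m * (m + 1) / 2 : ℕ) : ℤ) := by
  have h1 : ((-m : ℤ) * ((-m : ℤ) - 1)) = ((m * (m + 1) : ℕ) : ℤ) := by push_cast; ring
  rw [h1, Int.natCast_ediv]
  norm_num

lemma c_nat (q z : ℂ) (m : ℕ) :
    c q z (m : ℤ) = (-1 : ℂ) ^ m * q ^ (m * (m - 1) / 2) * z ^ m := by
  rw [c, exp_nat_cast, zpow_natCast, zpow_natCast, zpow_natCast]

lemma c_neg (q z : ℂ) (m : ℕ) :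
    c q z (-(m : ℤ)) = (-1 : ℂ) ^ m * q ^ (m * (m + 1) / 2) * (z ^ m)⁻¹ := by
  rw [c, exp_neg_cast, zpow_natCast, zpow_neg, zpow_neg, zpow_natCast, zpow_natCast]
  have hinv : ((-1 : ℂ) ^ m)⁻¹ = (-1 : ℂ) ^ m := by
    rcases Nat.even_or_odd m with h | h
    · rw [h.neg_one_pow]; norm_num
    · rw [h.neg_one_pow]; norm_num
  rw [hinv]

lemma norm_c_nat (q z : ℂ) (m : ℕ) :
    ‖c q z (m : ℤ)‖ = ‖q‖ ^ (m * (m - 1) / 2) * ‖z‖ ^ m := by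
  rw [c_nat, norm_mul, norm_mul, norm_pow, norm_pow, norm_pow]
  simp

lemma norm_c_neg (q z : ℂ) (m : ℕ) :
    ‖c q z (-(m : ℤ))‖ = ‖q‖ ^ (m * (m + 1) / 2) * (‖z‖ ^ m)⁻¹ := by
  rw [c_neg, norm_mul, norm_mul, norm_pow, norm_inv, norm_pow, norm_pow]
  simp

lemma summable_norm_c (hq : ‖q‖ < 1) {z : ℂ} (hz : z ≠ 0) :
    Summable fun n : ℤ => ‖c q z n‖ := by
  set r := ‖q‖ with hrdef
  have hr0 : 0 ≤ r := norm_nonneg q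
  have ht0 : 0 < ‖z‖ := norm_pos_iff.2 hz
  have hpos : ∀ n : ℤ, 0 ≤ ‖c q z n‖ := fun n => norm_nonneg _
  have hnat : Summable fun m : ℕ => ‖c q z (m : ℤ)‖ := by
    refine summable_of_ratio_norm_eventually_le (r := 1 / 2) (by norm_num) ?_
    have h0 : Tendsto (fun m : ℕ => r ^ m * ‖z‖) atTop (𝓝 0) := by
      simpa using (tendsto_pow_atTop_nhds_zero_of_lt_one hr0 hq).mul_const ‖z‖
    filter_upwards [h0.eventually_le_const (by norm_num : (0:ℝ) < 1/2),
      Filter.eventually_ge_atTop 1] with m hm hm1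
    rw [Real.norm_of_nonneg (hpos _), Real.norm_of_nonneg (hpos _),
      norm_c_nat, norm_c_nat, tri_succ, pow_add, pow_succ]
    calc r ^ (m * (m - 1) / 2) * r ^ m * (‖z‖ ^ m * ‖z‖)
        = (r ^ m * ‖z‖) * (r ^ (m * (m - 1) / 2) * ‖z‖ ^ m) := by ring
      _ ≤ 1 / 2 * (r ^ (m * (m - 1) / 2) * ‖z‖ ^ m) := by
          refine mul_le_mul_of_nonneg_right hm (by positivity)
  have hneg : Summable fun m : ℕ => ‖c q z (-(m : ℤ))‖ := by
    refine summable_of_ratio_norm_eventually_le (r := 1 / 2) (by norm_num) ?_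
    have h0 : Tendsto (fun m : ℕ => r ^ (m + 1) * (‖z‖)⁻¹) atTop (𝓝 0) := by
      simpa using ((tendsto_pow_atTop_nhds_zero_of_lt_one hr0 hq).comp
        (tendsto_add_atTop_nat 1)).mul_const (‖z‖)⁻¹
    filter_upwards [h0.eventually_le_const (by norm_num : (0:ℝ) < 1/2)] with m hm
    rw [Real.norm_of_nonneg (hpos _), Real.norm_of_nonneg (hpos _),
      norm_c_neg, norm_c_neg]
    have he : (m + 1) * ((m + 1) + 1) / 2 = m * (m + 1) / 2 + (m + 1) := by
      have h1 : (m + 1) * (m + 1 + 1) = m * (m + 1) + 2 * (m + 1) := by ring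
      rw [h1, Nat.add_mul_div_left _ _ (by norm_num : 0 < 2)]
    rw [he, pow_add, pow_succ]
    calc r ^ (m * (m + 1) / 2) * r ^ (m + 1) * (‖z‖ ^ m * ‖z‖)⁻¹
        = (r ^ (m + 1) * (‖z‖)⁻¹) * (r ^ (m * (m + 1) / 2) * (‖z‖ ^ m)⁻¹) := by
          rw [mul_inv]; ring
      _ ≤ 1 / 2 * (r ^ (m * (m + 1) / 2) * (‖z‖ ^ m)⁻¹) := by
          refine mul_le_mul_of_nonneg_right hm (by positivity)
  exact Summable.of_nat_of_neg hnat hneg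


lemma c_shift (hq0 : q ≠ 0) {z : ℂ} (hz : z ≠ 0) (N k : ℕ) :
    ((-1 : ℂ) ^ N * z ^ N) * c q z ((k : ℤ) - N)
      = q ^ (k * (k - 1) / 2 + N * (N + 1) / 2 - N * k) * ((-1 : ℂ) ^ k * z ^ k) := by
  set d : ℤ := (k : ℤ) - N with hd
  -- exponent identity
  have hev : Even (d * (d - 1)) := by
    have := Int.even_mul_succ_self (d - 1)
    simpa [mul_comm, sub_add_cancel] using this
  obtain ⟨e, he⟩ := hev
  have hdiv : d * (d - 1) / 2 = e := by rw [he]; omega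
  have hk2 : ((k * (k - 1) / 2 : ℕ) : ℤ) * 2 = (k : ℤ) * ((k : ℤ) - 1) := by
    rw [← exp_nat_cast k]
    refine Int.ediv_mul_cancel ?_
    have : Even ((k : ℤ) * ((k : ℤ) - 1)) := by
      have := Int.even_mul_succ_self ((k : ℤ) - 1)
      simpa [mul_comm, sub_add_cancel] using this
    exact this.two_dvd
  have hN2 : ((N * (N + 1) / 2 : ℕ) : ℤ) * 2 = (N : ℤ) * ((N : ℤ) + 1) := by
    have hc : ((2 * (N * (N + 1) / 2) : ℕ) : ℤ) = ((N * (N + 1) : ℕ) : ℤ) :=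
      congrArg (fun t : ℕ => (t : ℤ)) (half_mul_even N)
    rw [Nat.cast_mul, Nat.cast_mul, Nat.cast_add, Nat.cast_one, Nat.cast_ofNat] at hc
    linarith
  have hEcast : ((k * (k - 1) / 2 + N * (N + 1) / 2 - N * k : ℕ) : ℤ)
      = ((k * (k - 1) / 2 : ℕ) : ℤ) + ((N * (N + 1) / 2 : ℕ) : ℤ) - ((N * k : ℕ) : ℤ) := by
    rw [Nat.cast_sub (Ek_ineq N k)]
    push_cast
    ring
  have hE2 : ((k * (k - 1) / 2 + N * (N + 1) / 2 - N * k : ℕ) : ℤ) * 2 = d * (d - 1) := by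
    rw [hEcast, Nat.cast_mul, hd]
    linear_combination hk2 + hN2
  have hE : d * (d - 1) / 2 = ((k * (k - 1) / 2 + N * (N + 1) / 2 - N * k : ℕ) : ℤ) := by
    have h2 : d * (d - 1) / 2 * 2 = d * (d - 1) := by rw [he]; omega
    exact mul_right_cancel₀ (two_ne_zero) (h2.trans hE2.symm)
  rw [c, hE, zpow_natCast]
  have hm1 : (-1 : ℂ) ≠ 0 := by norm_num
  rw [hd, zpow_sub₀ hm1, zpow_sub₀ hz, zpow_natCast, zpow_natCast, zpow_natCast, zpow_natCast]
  have hzN : z ^ N ≠ 0 := pow_ne_zero _ hz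
  have hmN : (-1 : ℂ) ^ N ≠ 0 := pow_ne_zero _ hm1
  field_simp

lemma qBinom_eq_Cq (N k : ℕ) (hk : k ≤ 2 * N) :
    qBinom q ((2 * N : ℕ) : ℤ) (k : ℤ) = Cq q (2 * N) k := by
  rw [qBinom, Cq, if_pos ⟨Int.ofNat_nonneg k, by exact_mod_cast hk⟩, if_pos hk]
  have e1 : (((2 * N : ℕ) : ℤ)).toNat = 2 * N := by omega
  have e2 : ((k : ℕ) : ℤ).toNat = k := by omega
  have e3 : ((((2 * N : ℕ) : ℤ)) - (k : ℤ)).toNat = 2 * N - k := by omega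
  rw [e1, e2, e3]

lemma qBinom_norm_le (hq : ‖q‖ < 1) (N K : ℤ) :
    ‖qBinom q N K‖ ≤ Real.exp ((1 - ‖q‖)⁻¹)
      / (Real.exp (-((1 - ‖q‖)⁻¹ * (1 - ‖q‖)⁻¹)) * Real.exp (-((1 - ‖q‖)⁻¹ * (1 - ‖q‖)⁻¹))) := by
  rw [qBinom]
  split_ifs with h
  · rw [norm_div, norm_mul]
    refine div_le_div₀ (Real.exp_pos _).le (qPoch_norm_le hq _) (by positivity) ?_
    exact mul_le_mul (qPoch_norm_ge hq _) (qPoch_norm_ge hq _) (Real.exp_pos _).le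
      (norm_nonneg _)
  · rw [norm_zero]
    positivity

lemma tendsto_qBinom (hq : ‖q‖ < 1) (n : ℤ) :
    Tendsto (fun N : ℕ => qBinom q ((2 * N : ℕ) : ℤ) ((N : ℤ) + n)) atTop
      (𝓝 (qPochInf q q)⁻¹) := by
  have hP := qPochInf_ne hq
  have h2 : Tendsto (fun N : ℕ => 2 * N) atTop atTop :=
    tendsto_atTop_mono (fun N => by simp only [id_eq]; omega) tendsto_id
  have hA : Tendsto (fun N : ℕ => ((N : ℤ) + n).toNat) atTop atTop := by
    refine tendsto_atTop_mono (fun N => ?_) (tendsto_sub_atTop_nat n.natAbs)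
    omega
  have hB : Tendsto (fun N : ℕ => (((2 * N : ℕ) : ℤ) - ((N : ℤ) + n)).toNat) atTop atTop := by
    refine tendsto_atTop_mono (fun N => ?_) (tendsto_sub_atTop_nat n.natAbs)
    omega
  have t1 := (tendsto_qPoch hq q).comp h2
  have t2 := (tendsto_qPoch hq q).comp hA
  have t3 := (tendsto_qPoch hq q).comp hB
  have hlim := t1.div (t2.mul t3) (mul_ne_zero hP hP)
  have hval : qPochInf q q / (qPochInf q q * qPochInf q q) = (qPochInf q q)⁻¹ := by
    field_simp
  rw [hval] at hlim
  refine Tendsto.congr' ?_ hlim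
  filter_upwards [Filter.eventually_ge_atTop n.natAbs] with N hN
  simp only [Pi.div_apply, Function.comp_apply]
  rw [qBinom, if_pos ⟨by omega, by omega⟩]
  have e1 : (((2 * N : ℕ) : ℤ)).toNat = 2 * N := by omega
  rw [e1]

end JTP

open JTP Filter Topology in
/-- Jacobi's triple product identity. -/
theorem jacobi_triple_product (q z : ℂ) (hq : ‖q‖ < 1) (hz : z ≠ 0) :
    ∑' n : ℤ, (-1 : ℂ) ^ n * q ^ (n * (n - 1) / 2) * z ^ n
      = qPochInf z q * qPochInf (q / z) q * qPochInf q q := by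
  rcases eq_or_ne q 0 with rfl | hq0
  · -- q = 0
    have hLHS : (∑' n : ℤ, (-1 : ℂ) ^ n * (0 : ℂ) ^ (n * (n - 1) / 2) * z ^ n) = 1 - z := by
      rw [tsum_eq_sum (s := ({0, 1} : Finset ℤ)) ?_]
      · norm_num
        ring
      · intro n hn
        simp only [Finset.mem_insert, Finset.mem_singleton] at hn
        push_neg at hn
        have h2 : 2 ≤ n * (n - 1) := by
          rcases lt_or_ge n 0 with h | h
          · nlinarith
          · have h3 : 2 ≤ n := by omega
            nlinarith
        have he : n * (n - 1) / 2 ≠ 0 := by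
          have h1 : 1 ≤ n * (n - 1) / 2 := by
            rw [Int.le_ediv_iff_mul_le (by norm_num)]
            omega
          omega
        rw [zero_zpow _ he]
        ring
    rw [hLHS]
    have h1 : qPochInf z 0 = 1 - z := by
      rw [qPochInf, tprod_eq_mulSingle 0 ?_]
      · norm_num
      · intro k hk
        rw [zero_pow hk]
        ring
    have h2 : qPochInf (0 / z) 0 = 1 := by
      rw [qPochInf]
      have hcong : ∀ k : ℕ, (1 - 0 / z * (0 : ℂ) ^ k) = 1 := by intro k; simp
      calc ∏' k : ℕ, (1 - 0 / z * (0 : ℂ) ^ k) = ∏' _ : ℕ, (1 : ℂ) := tprod_congr hcong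
        _ = 1 := tprod_one
    have h3 : qPochInf 0 0 = 1 := by
      rw [qPochInf]
      have hcong : ∀ k : ℕ, (1 - 0 * (0 : ℂ) ^ k) = 1 := by intro k; simp
      calc ∏' k : ℕ, (1 - 0 * (0 : ℂ) ^ k) = ∏' _ : ℕ, (1 : ℂ) := tprod_congr hcong
        _ = 1 := tprod_one
    rw [h1, h2, h3]
    ring
  · -- main case
    have hzn : ∀ N : ℕ, ((-1 : ℂ) ^ N * z ^ N) ≠ 0 := fun N =>
      mul_ne_zero (pow_ne_zero _ (by norm_num)) (pow_ne_zero _ hz)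
    have hP : qPochInf q q ≠ 0 := qPochInf_ne hq
    have hSA : ∀ N : ℕ, (∑' n : ℤ, qBinom q ((2 * N : ℕ) : ℤ) ((N : ℤ) + n) * c q z n)
        = qPoch z q N * qPoch (q / z) q N := by
      intro N
      have hsupp : ∀ n ∉ Finset.Icc (-(N : ℤ)) (N : ℤ),
          qBinom q ((2 * N : ℕ) : ℤ) ((N : ℤ) + n) * c q z n = 0 := by
        intro n hn
        rw [Finset.mem_Icc] at hn
        push_neg at hn
        rw [qBinom, if_neg (by omega), zero_mul]
      rw [tsum_eq_sum hsupp]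
      have himg : (Finset.range (2 * N + 1)).image (fun k : ℕ => (k : ℤ) - N)
          = Finset.Icc (-(N : ℤ)) (N : ℤ) := by
        ext m
        simp only [Finset.mem_image, Finset.mem_range, Finset.mem_Icc]
        constructor
        · rintro ⟨k, hk, rfl⟩; omega
        · intro hm; exact ⟨(m + N).toNat, by omega, by omega⟩
      rw [← himg, Finset.sum_image (by intro a _ b _ h; have h' : (a : ℤ) - N = b - N := h; omega)]
      have hterm : ∀ k ∈ Finset.range (2 * N + 1),
          qBinom q ((2 * N : ℕ) : ℤ) ((N : ℤ) + ((k : ℤ) - N)) * c q z ((k : ℤ) - N)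
            = Cq q (2 * N) k * c q z ((k : ℤ) - N) := by
        intro k hk
        have hk' : k ≤ 2 * N := by have := Finset.mem_range.1 hk; omega
        have hNk : (N : ℤ) + ((k : ℤ) - N) = (k : ℤ) := by ring
        rw [hNk, qBinom_eq_Cq N k hk']
      rw [Finset.sum_congr rfl hterm]
      have hstar := star hq hq0 hz N
      have hsum2 : ∑ k ∈ Finset.range (2 * N + 1),
          Cq q (2 * N) k * q ^ (k * (k - 1) / 2 + N * (N + 1) / 2 - N * k)
            * ((-1 : ℂ) ^ k * z ^ k)
          = ((-1 : ℂ) ^ N * z ^ N)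
              * ∑ k ∈ Finset.range (2 * N + 1), Cq q (2 * N) k * c q z ((k : ℤ) - N) := by
        rw [Finset.mul_sum]
        refine Finset.sum_congr rfl fun k _ => ?_
        linear_combination (-(Cq q (2 * N) k)) * c_shift hq0 hz N k
      rw [hsum2] at hstar
      have hcanc := mul_left_cancel₀ (hzn N) hstar
      rw [← hcanc, Finset.prod_mul_distrib]
      rfl
    have hbound : Summable (fun n : ℤ =>
        (Real.exp ((1 - ‖q‖)⁻¹) / (Real.exp (-((1 - ‖q‖)⁻¹ * (1 - ‖q‖)⁻¹))
          * Real.exp (-((1 - ‖q‖)⁻¹ * (1 - ‖q‖)⁻¹)))) * ‖c q z n‖) :=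
      (summable_norm_c hq hz).mul_left _
    have hT : Tendsto (fun N : ℕ => ∑' n : ℤ, qBinom q ((2 * N : ℕ) : ℤ) ((N : ℤ) + n) * c q z n)
        atTop (𝓝 (∑' n : ℤ, (qPochInf q q)⁻¹ * c q z n)) := by
      refine tendsto_tsum_of_dominated_convergence hbound (fun n => ?_) ?_
      · exact (tendsto_qBinom hq n).mul_const _
      · filter_upwards with N n
        rw [norm_mul]
        exact mul_le_mul_of_nonneg_right (qBinom_norm_le hq _ _) (norm_nonneg _)
    have hA2 : Tendsto (fun N : ℕ => qPoch z q N * qPoch (q / z) q N) atTop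
        (𝓝 (qPochInf z q * qPochInf (q / z) q)) :=
      (tendsto_qPoch hq z).mul (tendsto_qPoch hq (q / z))
    have huniq : (∑' n : ℤ, (qPochInf q q)⁻¹ * c q z n)
        = qPochInf z q * qPochInf (q / z) q :=
      tendsto_nhds_unique (Filter.Tendsto.congr hSA hT) hA2
    rw [tsum_mul_left] at huniq
    show (∑' n : ℤ, c q z n) = _
    rw [← huniq]
    field_simp
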